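/- Let h_1(x) = x_{12} − 3x_{13} − x_{23} + 8x_{14} + 2x_{24} + 2x_{34} and h_2(x) = 2x_{12} + x_{13} − 5x_{23} + x_{14} − 3x_{24} + x_{34}. The vector space of real homogeneous quadratic polynomials in the six variables that vanish identically on each of the three linear subspaces {x_{13} = h_1 = 0}, {x_{12} = x_{14} = x_{34} = 0}, {x_{23} = x_{24} = h_2 = 0} of ℝ^6 is exactly one-dimensional, spanned by a = 2x_{12}^2 + x_{12}x_{13} + 17x_{12}x_{14} + 8x_{13}x_{14} + 8x_{14}^2 − 2x_{12}x_{23} − x_{14}x_{23} + 4x_{12}x_{24} + 2x_{14}x_{24} + 5x_{12}x_{34} + 2x_{13}x_{34} + 10x_{14}x_{34} − x_{23}x_{34} + 2x_{24}x_{34} + 2x_{34}^2. -/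

import Mathlib

open MvPolynomial

open MvPolynomial Finsupp

noncomputable def mm (i j : Fin 6) : Fin 6 →₀ ℕ := Finsupp.single i 1 + Finsupp.single j 1

lemma mm_comm (i j : Fin 6) : mm i j = mm j i := add_comm _ _

lemma mm_deg (i j : Fin 6) : (mm i j).degree = 2 := by
  simp [mm, Finsupp.degree_eq_weight_one, map_add, Finsupp.weight_apply, Finsupp.sum_single_index]

lemma mm_inj {a b i j : Fin 6} : mm a b = mm i j ↔ (a = i ∧ b = j) ∨ (a = j ∧ b = i) := by
  constructor
  · intro h
    have h2 := congrArg Finsupp.toMultiset h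
    simp only [mm, Finsupp.toMultiset_add, Finsupp.toMultiset_single, one_smul,
      Multiset.singleton_add] at h2
    rw [Multiset.cons_eq_cons] at h2
    rcases h2 with ⟨rfl, h3⟩ | ⟨hne, cs, h3, h4⟩
    · simp at h3; tauto
    · rw [Multiset.singleton_eq_cons_iff] at h4 h3
      obtain ⟨rfl, rfl⟩ := h4
      simp at h3; tauto
  · rintro (⟨rfl, rfl⟩ | ⟨rfl, rfl⟩)
    · rfl
    · exact add_comm _ _

lemma coeff_cXX (c : ℝ) (i j : Fin 6) (m : Fin 6 →₀ ℕ) :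
    coeff m (C c * (X i * X j)) = if mm i j = m then c else 0 := by
  classical
  rw [coeff_C_mul, X, X, monomial_mul, coeff_monomial]
  simp [mm, mul_ite]
  exact if_congr Iff.rfl rfl rfl

lemma classify (m : Fin 6 →₀ ℕ) (h : m.degree = 2) : ∃ a b : Fin 6, m = mm a b := by
  classical
  have hc : Multiset.card (Finsupp.toMultiset m) = 2 := by
    rw [Finsupp.card_toMultiset]
    rw [← h]
    rfl
  obtain ⟨a, b, hab⟩ := Multiset.card_eq_two.mp hc
  have key : Finsupp.toMultiset (mm a b) = {a, b} := by
    simp [mm, Multiset.insert_eq_cons, Multiset.singleton_add]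
  refine ⟨a, b, ?_⟩
  calc m = Multiset.toFinsupp (Finsupp.toMultiset m) := (Finsupp.toMultiset_toFinsupp m).symm
    _ = Multiset.toFinsupp ({a, b} : Multiset (Fin 6)) := by rw [hab]
    _ = Multiset.toFinsupp (Finsupp.toMultiset (mm a b)) := by rw [key]
    _ = mm a b := Finsupp.toMultiset_toFinsupp _

set_option maxHeartbeats 2000000 in
lemma decomp (q : MvPolynomial (Fin 6) ℝ) (hq : q.IsHomogeneous 2) :
    q = C (coeff (mm 0 0) q) * (X 0 * X 0) + C (coeff (mm 0 1) q) * (X 0 * X 1) + C (coeff (mm 0 2) q) * (X 0 * X 2) + C (coeff (mm 0 3) q) * (X 0 * X 3) + C (coeff (mm 0 4) q) * (X 0 * X 4) + C (coeff (mm 0 5) q) * (X 0 * X 5) + C (coeff (mm 1 1) q) * (X 1 * X 1) + C (coeff (mm 1 2) q) * (X 1 * X 2) + C (coeff (mm 1 3) q) * (X 1 * X 3) + C (coeff (mm 1 4) q) * (X 1 * X 4) + C (coeff (mm 1 5) q) * (X 1 * X 5) + C (coeff (mm 2 2) q) * (X 2 * X 2) + C (coeff (mm 2 3) q) * (X 2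 * X 3) + C (coeff (mm 2 4) q) * (X 2 * X 4) + C (coeff (mm 2 5) q) * (X 2 * X 5) + C (coeff (mm 3 3) q) * (X 3 * X 3) + C (coeff (mm 3 4) q) * (X 3 * X 4) + C (coeff (mm 3 5) q) * (X 3 * X 5) + C (coeff (mm 4 4) q) * (X 4 * X 4) + C (coeff (mm 4 5) q) * (X 4 * X 5) + C (coeff (mm 5 5) q) * (X 5 * X 5) := by
  ext m
  simp only [coeff_add, coeff_cXX]
  by_cases hdeg : m.degree = 2
  · obtain ⟨a, b, rfl⟩ := classify m hdeg
    fin_cases a <;> fin_cases b <;>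
      simp (config := { decide := true }) [mm_inj, mm_comm] <;>
      exact congrArg (fun m => coeff m q) (mm_comm _ _)
  · have hne : ∀ i j : Fin 6, ¬ (mm i j = m) := fun i j h => hdeg (h ▸ mm_deg i j)
    simp [hne, hq.coeff_eq_zero hdeg]

/-- `h₁ = x₁₂ − 3x₁₃ − x₂₃ + 8x₁₄ + 2x₂₄ + 2x₃₄`; coordinates of `ℝ^6` are ordered as
`(x₁₂, x₁₃, x₂₃, x₁₄, x₂₄, x₃₄)`, i.e. indices `0,…,5`. -/
noncomputable def h18 : MvPolynomial (Fin 6) ℝ :=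
  X 0 - C 3 * X 1 - X 2 + C 8 * X 3 + C 2 * X 4 + C 2 * X 5

/-- `h₂ = 2x₁₂ + x₁₃ − 5x₂₃ + x₁₄ − 3x₂₄ + x₃₄`. -/
noncomputable def h28 : MvPolynomial (Fin 6) ℝ :=
  C 2 * X 0 + X 1 - C 5 * X 2 + X 3 - C 3 * X 4 + X 5

/-- The unique adjoint quadric of the associated polytope in Example 5.5. -/
noncomputable def aP8 : MvPolynomial (Fin 6) ℝ :=
  C 2 * X 0 ^ 2 + X 0 * X 1 + C 17 * X 0 * X 3 + C 8 * X 1 * X 3 + C 8 * X 3 ^ 2 -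
    C 2 * X 0 * X 2 - X 3 * X 2 + C 4 * X 0 * X 4 + C 2 * X 3 * X 4 + C 5 * X 0 * X 5 +
    C 2 * X 1 * X 5 + C 10 * X 3 * X 5 - X 2 * X 5 + C 2 * X 4 * X 5 + C 2 * X 5 ^ 2

lemma eval_decomp (q : MvPolynomial (Fin 6) ℝ) (hq : q.IsHomogeneous 2) (x : Fin 6 → ℝ) :
    eval x q = coeff (mm 0 0) q * (x 0 * x 0) + coeff (mm 0 1) q * (x 0 * x 1) + coeff (mm 0 2) q * (x 0 * x 2) + coeff (mm 0 3) q * (x 0 * x 3) + coeff (mm 0 4) q * (x 0 * x 4) + coeff (mm 0 5) q * (x 0 * x 5) + coeff (mm 1 1) q * (x 1 * x 1) + coeff (mm 1 2) q * (x 1 * x 2) + coeff (mm 1 3) q * (x 1 * x 3) + coeff (mm 1 4) q * (x 1 * x 4) + coeff (mm 1 5) q * (x 1 * x 5) + coeff (mm 2 2) q * (x 2 * x 2) + coeff (mm 2 3) q * (x 2 * x 3) + coeff (mm 2 4) q * (x 2 * x 4) + coeff (mm 2 5) q * (x 2 * x 5) + coeff (mm 3 3) q * (x 3 * x 3) + coeff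 (mm 3 4) q * (x 3 * x 4) + coeff (mm 3 5) q * (x 3 * x 5) + coeff (mm 4 4) q * (x 4 * x 4) + coeff (mm 4 5) q * (x 4 * x 5) + coeff (mm 5 5) q * (x 5 * x 5) := by
  conv_lhs => rw [decomp q hq]
  simp only [map_add, map_mul, eval_C, eval_X]

lemma eval_h18 (x : Fin 6 → ℝ) :
    eval x h18 = x 0 - 3 * x 1 - x 2 + 8 * x 3 + 2 * x 4 + 2 * x 5 := by
  simp [h18]

lemma eval_h28 (x : Fin 6 → ℝ) :
    eval x h28 = 2 * x 0 + x 1 - 5 * x 2 + x 3 - 3 * x 4 + x 5 := by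
  simp [h28]

lemma eval_aP8 (x : Fin 6 → ℝ) :
    eval x aP8 = 2 * x 0 ^ 2 + x 0 * x 1 + 17 * x 0 * x 3 + 8 * x 1 * x 3 + 8 * x 3 ^ 2 -
      2 * x 0 * x 2 - x 3 * x 2 + 4 * x 0 * x 4 + 2 * x 3 * x 4 + 5 * x 0 * x 5 +
      2 * x 1 * x 5 + 10 * x 3 * x 5 - x 2 * x 5 + 2 * x 4 * x 5 + 2 * x 5 ^ 2 := by
  simp [aP8]

lemma eval_smul_aP8 (t : ℝ) (x : Fin 6 → ℝ) : eval x (t • aP8) = t * eval x aP8 := by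
  rw [MvPolynomial.smul_eq_C_mul, map_mul, eval_C]

lemma aP8_hom : aP8.IsHomogeneous 2 := by
  rw [aP8]
  repeat' first
  | apply MvPolynomial.IsHomogeneous.add
  | apply MvPolynomial.IsHomogeneous.sub
  | with_reducible_and_instances exact (isHomogeneous_X _ _).mul (isHomogeneous_X _ _)
  | with_reducible_and_instances exact (isHomogeneous_C _ _).mul ((isHomogeneous_X _ _).pow 2)
  | with_reducible_and_instances exact ((isHomogeneous_C _ _).mul (isHomogeneous_X _ _)).mul (isHomogeneous_X _ _)


set_option maxHeartbeats 2000000 in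
theorem stmt8 :
    aP8 ≠ 0 ∧
    {q : MvPolynomial (Fin 6) ℝ |
        q.IsHomogeneous 2 ∧
        (∀ x : Fin 6 → ℝ, x 1 = 0 → eval x h18 = 0 → eval x q = 0) ∧
        (∀ x : Fin 6 → ℝ, x 0 = 0 → x 3 = 0 → x 5 = 0 → eval x q = 0) ∧
        (∀ x : Fin 6 → ℝ, x 2 = 0 → x 4 = 0 → eval x h28 = 0 → eval x q = 0)} =
      {q | ∃ t : ℝ, q = t • aP8} := by
  constructor
  · intro h
    have h2 := congrArg (eval ![(0:ℝ),0,0,0,0,1]) h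
    rw [eval_aP8, map_zero] at h2
    simp only [show (![(0:ℝ),0,0,0,0,1] : Fin 6 → ℝ) 0 = (0:ℝ) from rfl,
      show (![(0:ℝ),0,0,0,0,1] : Fin 6 → ℝ) 1 = (0:ℝ) from rfl,
      show (![(0:ℝ),0,0,0,0,1] : Fin 6 → ℝ) 2 = (0:ℝ) from rfl,
      show (![(0:ℝ),0,0,0,0,1] : Fin 6 → ℝ) 3 = (0:ℝ) from rfl,
      show (![(0:ℝ),0,0,0,0,1] : Fin 6 → ℝ) 4 = (0:ℝ) from rfl,
      show (![(0:ℝ),0,0,0,0,1] : Fin 6 → ℝ) 5 = (1:ℝ) from rfl] at h2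
    norm_num at h2
  ext q
  simp only [Set.mem_setOf_eq]
  constructor
  · rintro ⟨hq, H1, H2, H3⟩
    have E := eval_decomp q hq
    have e0 : coeff (mm 0 0) q + coeff (mm 0 2) q + coeff (mm 2 2) q = 0 := by
      have h := H1 ![1,0,1,0,0,0] rfl (by rw [eval_h18]; simp only [show (![1,0,1,0,0,0] : Fin 6 → ℝ) 0 = 1 from rfl, show (![1,0,1,0,0,0] : Fin 6 → ℝ) 1 = 0 from rfl, show (![1,0,1,0,0,0] : Fin 6 → ℝ) 2 = 1 from rfl, show (![1,0,1,0,0,0] : Fin 6 → ℝ) 3 = 0 from rfl, show (![1,0,1,0,0,0] : Fin 6 → ℝ) 4 = 0 from rfl, show (![1,0,1,0,0,0] : Fin 6 → ℝ) 5 = 0 from rfl]; norm_num)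
      rw [E] at h
      simp only [show (![1,0,1,0,0,0] : Fin 6 → ℝ) 0 = (1:ℝ) from rfl, show (![1,0,1,0,0,0] : Fin 6 → ℝ) 1 = (0:ℝ) from rfl, show (![1,0,1,0,0,0] : Fin 6 → ℝ) 2 = (1:ℝ) from rfl, show (![1,0,1,0,0,0] : Fin 6 → ℝ) 3 = (0:ℝ) from rfl, show (![1,0,1,0,0,0] : Fin 6 → ℝ) 4 = (0:ℝ) from rfl, show (![1,0,1,0,0,0] : Fin 6 → ℝ) 5 = (0:ℝ) from rfl] at h
      linarith [h]
    have e1 : (64:ℝ) * coeff (mm 0 0) q + (-8:ℝ) * coeff (mm 0 3) q + coeff (mm 3 3) q = 0 := by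
      have h := H1 ![(-8:ℝ),0,0,1,0,0] rfl (by rw [eval_h18]; simp only [show (![(-8:ℝ),0,0,1,0,0] : Fin 6 → ℝ) 0 = (-8:ℝ) from rfl, show (![(-8:ℝ),0,0,1,0,0] : Fin 6 → ℝ) 1 = 0 from rfl, show (![(-8:ℝ),0,0,1,0,0] : Fin 6 → ℝ) 2 = 0 from rfl, show (![(-8:ℝ),0,0,1,0,0] : Fin 6 → ℝ) 3 = 1 from rfl, show (![(-8:ℝ),0,0,1,0,0] : Fin 6 → ℝ) 4 = 0 from rfl, show (![(-8:ℝ),0,0,1,0,0] : Fin 6 → ℝ) 5 = 0 from rfl]; norm_num)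
      rw [E] at h
      simp only [show (![(-8:ℝ),0,0,1,0,0] : Fin 6 → ℝ) 0 = (-8:ℝ) from rfl, show (![(-8:ℝ),0,0,1,0,0] : Fin 6 → ℝ) 1 = (0:ℝ) from rfl, show (![(-8:ℝ),0,0,1,0,0] : Fin 6 → ℝ) 2 = (0:ℝ) from rfl, show (![(-8:ℝ),0,0,1,0,0] : Fin 6 → ℝ) 3 = (1:ℝ) from rfl, show (![(-8:ℝ),0,0,1,0,0] : Fin 6 → ℝ) 4 = (0:ℝ) from rfl, show (![(-8:ℝ),0,0,1,0,0] : Fin 6 → ℝ) 5 = (0:ℝ) from rfl] at h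
      linarith [h]
    have e2 : (4:ℝ) * coeff (mm 0 0) q + (-2:ℝ) * coeff (mm 0 4) q + coeff (mm 4 4) q = 0 := by
      have h := H1 ![(-2:ℝ),0,0,0,1,0] rfl (by rw [eval_h18]; simp only [show (![(-2:ℝ),0,0,0,1,0] : Fin 6 → ℝ) 0 = (-2:ℝ) from rfl, show (![(-2:ℝ),0,0,0,1,0] : Fin 6 → ℝ) 1 = 0 from rfl, show (![(-2:ℝ),0,0,0,1,0] : Fin 6 → ℝ) 2 = 0 from rfl, show (![(-2:ℝ),0,0,0,1,0] : Fin 6 → ℝ) 3 = 0 from rfl, show (![(-2:ℝ),0,0,0,1,0] : Fin 6 → ℝ) 4 = 1 from rfl, show (![(-2:ℝ),0,0,0,1,0] : Fin 6 → ℝ) 5 = 0 from rfl]; norm_num)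
      rw [E] at h
      simp only [show (![(-2:ℝ),0,0,0,1,0] : Fin 6 → ℝ) 0 = (-2:ℝ) from rfl, show (![(-2:ℝ),0,0,0,1,0] : Fin 6 → ℝ) 1 = (0:ℝ) from rfl, show (![(-2:ℝ),0,0,0,1,0] : Fin 6 → ℝ) 2 = (0:ℝ) from rfl, show (![(-2:ℝ),0,0,0,1,0] : Fin 6 → ℝ) 3 = (0:ℝ) from rfl, show (![(-2:ℝ),0,0,0,1,0] : Fin 6 → ℝ) 4 = (1:ℝ) from rfl, show (![(-2:ℝ),0,0,0,1,0] : Fin 6 → ℝ) 5 = (0:ℝ) from rfl] at h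
      linarith [h]
    have e3 : (4:ℝ) * coeff (mm 0 0) q + (-2:ℝ) * coeff (mm 0 5) q + coeff (mm 5 5) q = 0 := by
      have h := H1 ![(-2:ℝ),0,0,0,0,1] rfl (by rw [eval_h18]; simp only [show (![(-2:ℝ),0,0,0,0,1] : Fin 6 → ℝ) 0 = (-2:ℝ) from rfl, show (![(-2:ℝ),0,0,0,0,1] : Fin 6 → ℝ) 1 = 0 from rfl, show (![(-2:ℝ),0,0,0,0,1] : Fin 6 → ℝ) 2 = 0 from rfl, show (![(-2:ℝ),0,0,0,0,1] : Fin 6 → ℝ) 3 = 0 from rfl, show (![(-2:ℝ),0,0,0,0,1] : Fin 6 → ℝ) 4 = 0 from rfl, show (![(-2:ℝ),0,0,0,0,1] : Fin 6 → ℝ) 5 = 1 from rfl]; norm_num)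
      rw [E] at h
      simp only [show (![(-2:ℝ),0,0,0,0,1] : Fin 6 → ℝ) 0 = (-2:ℝ) from rfl, show (![(-2:ℝ),0,0,0,0,1] : Fin 6 → ℝ) 1 = (0:ℝ) from rfl, show (![(-2:ℝ),0,0,0,0,1] : Fin 6 → ℝ) 2 = (0:ℝ) from rfl, show (![(-2:ℝ),0,0,0,0,1] : Fin 6 → ℝ) 3 = (0:ℝ) from rfl, show (![(-2:ℝ),0,0,0,0,1] : Fin 6 → ℝ) 4 = (0:ℝ) from rfl, show (![(-2:ℝ),0,0,0,0,1] : Fin 6 → ℝ) 5 = (1:ℝ) from rfl] at h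
      linarith [h]
    have e4 : (49:ℝ) * coeff (mm 0 0) q + (-7:ℝ) * coeff (mm 0 2) q + (-7:ℝ) * coeff (mm 0 3) q + coeff (mm 2 2) q + coeff (mm 2 3) q + coeff (mm 3 3) q = 0 := by
      have h := H1 ![(-7:ℝ),0,1,1,0,0] rfl (by rw [eval_h18]; simp only [show (![(-7:ℝ),0,1,1,0,0] : Fin 6 → ℝ) 0 = (-7:ℝ) from rfl, show (![(-7:ℝ),0,1,1,0,0] : Fin 6 → ℝ) 1 = 0 from rfl, show (![(-7:ℝ),0,1,1,0,0] : Fin 6 → ℝ) 2 = 1 from rfl, show (![(-7:ℝ),0,1,1,0,0] : Fin 6 → ℝ) 3 = 1 from rfl, show (![(-7:ℝ),0,1,1,0,0] : Fin 6 → ℝ) 4 = 0 from rfl, show (![(-7:ℝ),0,1,1,0,0] : Fin 6 → ℝ) 5 = 0 from rfl]; norm_num)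
      rw [E] at h
      simp only [show (![(-7:ℝ),0,1,1,0,0] : Fin 6 → ℝ) 0 = (-7:ℝ) from rfl, show (![(-7:ℝ),0,1,1,0,0] : Fin 6 → ℝ) 1 = (0:ℝ) from rfl, show (![(-7:ℝ),0,1,1,0,0] : Fin 6 → ℝ) 2 = (1:ℝ) from rfl, show (![(-7:ℝ),0,1,1,0,0] : Fin 6 → ℝ) 3 = (1:ℝ) from rfl, show (![(-7:ℝ),0,1,1,0,0] : Fin 6 → ℝ) 4 = (0:ℝ) from rfl, show (![(-7:ℝ),0,1,1,0,0] : Fin 6 → ℝ) 5 = (0:ℝ) from rfl] at h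
      linarith [h]
    have e5 : coeff (mm 0 0) q + (-1:ℝ) * coeff (mm 0 2) q + (-1:ℝ) * coeff (mm 0 4) q + coeff (mm 2 2) q + coeff (mm 2 4) q + coeff (mm 4 4) q = 0 := by
      have h := H1 ![(-1:ℝ),0,1,0,1,0] rfl (by rw [eval_h18]; simp only [show (![(-1:ℝ),0,1,0,1,0] : Fin 6 → ℝ) 0 = (-1:ℝ) from rfl, show (![(-1:ℝ),0,1,0,1,0] : Fin 6 → ℝ) 1 = 0 from rfl, show (![(-1:ℝ),0,1,0,1,0] : Fin 6 → ℝ) 2 = 1 from rfl, show (![(-1:ℝ),0,1,0,1,0] : Fin 6 → ℝ) 3 = 0 from rfl, show (![(-1:ℝ),0,1,0,1,0] : Fin 6 → ℝ) 4 = 1 from rfl, show (![(-1:ℝ),0,1,0,1,0] : Fin 6 → ℝ) 5 = 0 from rfl]; norm_num)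
      rw [E] at h
      simp only [show (![(-1:ℝ),0,1,0,1,0] : Fin 6 → ℝ) 0 = (-1:ℝ) from rfl, show (![(-1:ℝ),0,1,0,1,0] : Fin 6 → ℝ) 1 = (0:ℝ) from rfl, show (![(-1:ℝ),0,1,0,1,0] : Fin 6 → ℝ) 2 = (1:ℝ) from rfl, show (![(-1:ℝ),0,1,0,1,0] : Fin 6 → ℝ) 3 = (0:ℝ) from rfl, show (![(-1:ℝ),0,1,0,1,0] : Fin 6 → ℝ) 4 = (1:ℝ) from rfl, show (![(-1:ℝ),0,1,0,1,0] : Fin 6 → ℝ) 5 = (0:ℝ) from rfl] at h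
      linarith [h]
    have e6 : coeff (mm 0 0) q + (-1:ℝ) * coeff (mm 0 2) q + (-1:ℝ) * coeff (mm 0 5) q + coeff (mm 2 2) q + coeff (mm 2 5) q + coeff (mm 5 5) q = 0 := by
      have h := H1 ![(-1:ℝ),0,1,0,0,1] rfl (by rw [eval_h18]; simp only [show (![(-1:ℝ),0,1,0,0,1] : Fin 6 → ℝ) 0 = (-1:ℝ) from rfl, show (![(-1:ℝ),0,1,0,0,1] : Fin 6 → ℝ) 1 = 0 from rfl, show (![(-1:ℝ),0,1,0,0,1] : Fin 6 → ℝ) 2 = 1 from rfl, show (![(-1:ℝ),0,1,0,0,1] : Fin 6 → ℝ) 3 = 0 from rfl, show (![(-1:ℝ),0,1,0,0,1] : Fin 6 → ℝ) 4 = 0 from rfl, show (![(-1:ℝ),0,1,0,0,1] : Fin 6 → ℝ) 5 = 1 from rfl]; norm_num)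
      rw [E] at h
      simp only [show (![(-1:ℝ),0,1,0,0,1] : Fin 6 → ℝ) 0 = (-1:ℝ) from rfl, show (![(-1:ℝ),0,1,0,0,1] : Fin 6 → ℝ) 1 = (0:ℝ) from rfl, show (![(-1:ℝ),0,1,0,0,1] : Fin 6 → ℝ) 2 = (1:ℝ) from rfl, show (![(-1:ℝ),0,1,0,0,1] : Fin 6 → ℝ) 3 = (0:ℝ) from rfl, show (![(-1:ℝ),0,1,0,0,1] : Fin 6 → ℝ) 4 = (0:ℝ) from rfl, show (![(-1:ℝ),0,1,0,0,1] : Fin 6 → ℝ) 5 = (1:ℝ) from rfl] at h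
      linarith [h]
    have e7 : (100:ℝ) * coeff (mm 0 0) q + (-10:ℝ) * coeff (mm 0 3) q + (-10:ℝ) * coeff (mm 0 4) q + coeff (mm 3 3) q + coeff (mm 3 4) q + coeff (mm 4 4) q = 0 := by
      have h := H1 ![(-10:ℝ),0,0,1,1,0] rfl (by rw [eval_h18]; simp only [show (![(-10:ℝ),0,0,1,1,0] : Fin 6 → ℝ) 0 = (-10:ℝ) from rfl, show (![(-10:ℝ),0,0,1,1,0] : Fin 6 → ℝ) 1 = 0 from rfl, show (![(-10:ℝ),0,0,1,1,0] : Fin 6 → ℝ) 2 = 0 from rfl, show (![(-10:ℝ),0,0,1,1,0] : Fin 6 → ℝ) 3 = 1 from rfl, show (![(-10:ℝ),0,0,1,1,0] : Fin 6 → ℝ) 4 = 1 from rfl, show (![(-10:ℝ),0,0,1,1,0] : Fin 6 → ℝ) 5 = 0 from rfl]; norm_num)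
      rw [E] at h
      simp only [show (![(-10:ℝ),0,0,1,1,0] : Fin 6 → ℝ) 0 = (-10:ℝ) from rfl, show (![(-10:ℝ),0,0,1,1,0] : Fin 6 → ℝ) 1 = (0:ℝ) from rfl, show (![(-10:ℝ),0,0,1,1,0] : Fin 6 → ℝ) 2 = (0:ℝ) from rfl, show (![(-10:ℝ),0,0,1,1,0] : Fin 6 → ℝ) 3 = (1:ℝ) from rfl, show (![(-10:ℝ),0,0,1,1,0] : Fin 6 → ℝ) 4 = (1:ℝ) from rfl, show (![(-10:ℝ),0,0,1,1,0] : Fin 6 → ℝ) 5 = (0:ℝ) from rfl] at h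
      linarith [h]
    have e8 : (100:ℝ) * coeff (mm 0 0) q + (-10:ℝ) * coeff (mm 0 3) q + (-10:ℝ) * coeff (mm 0 5) q + coeff (mm 3 3) q + coeff (mm 3 5) q + coeff (mm 5 5) q = 0 := by
      have h := H1 ![(-10:ℝ),0,0,1,0,1] rfl (by rw [eval_h18]; simp only [show (![(-10:ℝ),0,0,1,0,1] : Fin 6 → ℝ) 0 = (-10:ℝ) from rfl, show (![(-10:ℝ),0,0,1,0,1] : Fin 6 → ℝ) 1 = 0 from rfl, show (![(-10:ℝ),0,0,1,0,1] : Fin 6 → ℝ) 2 = 0 from rfl, show (![(-10:ℝ),0,0,1,0,1] : Fin 6 → ℝ) 3 = 1 from rfl, show (![(-10:ℝ),0,0,1,0,1] : Fin 6 → ℝ) 4 = 0 from rfl, show (![(-10:ℝ),0,0,1,0,1] : Fin 6 → ℝ) 5 = 1 from rfl]; norm_num)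
      rw [E] at h
      simp only [show (![(-10:ℝ),0,0,1,0,1] : Fin 6 → ℝ) 0 = (-10:ℝ) from rfl, show (![(-10:ℝ),0,0,1,0,1] : Fin 6 → ℝ) 1 = (0:ℝ) from rfl, show (![(-10:ℝ),0,0,1,0,1] : Fin 6 → ℝ) 2 = (0:ℝ) from rfl, show (![(-10:ℝ),0,0,1,0,1] : Fin 6 → ℝ) 3 = (1:ℝ) from rfl, show (![(-10:ℝ),0,0,1,0,1] : Fin 6 → ℝ) 4 = (0:ℝ) from rfl, show (![(-10:ℝ),0,0,1,0,1] : Fin 6 → ℝ) 5 = (1:ℝ) from rfl] at h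
      linarith [h]
    have e9 : (16:ℝ) * coeff (mm 0 0) q + (-4:ℝ) * coeff (mm 0 4) q + (-4:ℝ) * coeff (mm 0 5) q + coeff (mm 4 4) q + coeff (mm 4 5) q + coeff (mm 5 5) q = 0 := by
      have h := H1 ![(-4:ℝ),0,0,0,1,1] rfl (by rw [eval_h18]; simp only [show (![(-4:ℝ),0,0,0,1,1] : Fin 6 → ℝ) 0 = (-4:ℝ) from rfl, show (![(-4:ℝ),0,0,0,1,1] : Fin 6 → ℝ) 1 = 0 from rfl, show (![(-4:ℝ),0,0,0,1,1] : Fin 6 → ℝ) 2 = 0 from rfl, show (![(-4:ℝ),0,0,0,1,1] : Fin 6 → ℝ) 3 = 0 from rfl, show (![(-4:ℝ),0,0,0,1,1] : Fin 6 → ℝ) 4 = 1 from rfl, show (![(-4:ℝ),0,0,0,1,1] : Fin 6 → ℝ) 5 = 1 from rfl]; norm_num)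
      rw [E] at h
      simp only [show (![(-4:ℝ),0,0,0,1,1] : Fin 6 → ℝ) 0 = (-4:ℝ) from rfl, show (![(-4:ℝ),0,0,0,1,1] : Fin 6 → ℝ) 1 = (0:ℝ) from rfl, show (![(-4:ℝ),0,0,0,1,1] : Fin 6 → ℝ) 2 = (0:ℝ) from rfl, show (![(-4:ℝ),0,0,0,1,1] : Fin 6 → ℝ) 3 = (0:ℝ) from rfl, show (![(-4:ℝ),0,0,0,1,1] : Fin 6 → ℝ) 4 = (1:ℝ) from rfl, show (![(-4:ℝ),0,0,0,1,1] : Fin 6 → ℝ) 5 = (1:ℝ) from rfl] at h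
      linarith [h]
    have e10 : coeff (mm 1 1) q = 0 := by
      have h := H2 ![0,1,0,0,0,0] rfl rfl rfl
      rw [E] at h
      simp only [show (![0,1,0,0,0,0] : Fin 6 → ℝ) 0 = (0:ℝ) from rfl, show (![0,1,0,0,0,0] : Fin 6 → ℝ) 1 = (1:ℝ) from rfl, show (![0,1,0,0,0,0] : Fin 6 → ℝ) 2 = (0:ℝ) from rfl, show (![0,1,0,0,0,0] : Fin 6 → ℝ) 3 = (0:ℝ) from rfl, show (![0,1,0,0,0,0] : Fin 6 → ℝ) 4 = (0:ℝ) from rfl, show (![0,1,0,0,0,0] : Fin 6 → ℝ) 5 = (0:ℝ) from rfl] at h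
      linarith [h]
    have e11 : coeff (mm 2 2) q = 0 := by
      have h := H2 ![0,0,1,0,0,0] rfl rfl rfl
      rw [E] at h
      simp only [show (![0,0,1,0,0,0] : Fin 6 → ℝ) 0 = (0:ℝ) from rfl, show (![0,0,1,0,0,0] : Fin 6 → ℝ) 1 = (0:ℝ) from rfl, show (![0,0,1,0,0,0] : Fin 6 → ℝ) 2 = (1:ℝ) from rfl, show (![0,0,1,0,0,0] : Fin 6 → ℝ) 3 = (0:ℝ) from rfl, show (![0,0,1,0,0,0] : Fin 6 → ℝ) 4 = (0:ℝ) from rfl, show (![0,0,1,0,0,0] : Fin 6 → ℝ) 5 = (0:ℝ) from rfl] at h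
      linarith [h]
    have e12 : coeff (mm 4 4) q = 0 := by
      have h := H2 ![0,0,0,0,1,0] rfl rfl rfl
      rw [E] at h
      simp only [show (![0,0,0,0,1,0] : Fin 6 → ℝ) 0 = (0:ℝ) from rfl, show (![0,0,0,0,1,0] : Fin 6 → ℝ) 1 = (0:ℝ) from rfl, show (![0,0,0,0,1,0] : Fin 6 → ℝ) 2 = (0:ℝ) from rfl, show (![0,0,0,0,1,0] : Fin 6 → ℝ) 3 = (0:ℝ) from rfl, show (![0,0,0,0,1,0] : Fin 6 → ℝ) 4 = (1:ℝ) from rfl, show (![0,0,0,0,1,0] : Fin 6 → ℝ) 5 = (0:ℝ) from rfl] at h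
      linarith [h]
    have e13 : coeff (mm 1 1) q + coeff (mm 1 2) q + coeff (mm 2 2) q = 0 := by
      have h := H2 ![0,1,1,0,0,0] rfl rfl rfl
      rw [E] at h
      simp only [show (![0,1,1,0,0,0] : Fin 6 → ℝ) 0 = (0:ℝ) from rfl, show (![0,1,1,0,0,0] : Fin 6 → ℝ) 1 = (1:ℝ) from rfl, show (![0,1,1,0,0,0] : Fin 6 → ℝ) 2 = (1:ℝ) from rfl, show (![0,1,1,0,0,0] : Fin 6 → ℝ) 3 = (0:ℝ) from rfl, show (![0,1,1,0,0,0] : Fin 6 → ℝ) 4 = (0:ℝ) from rfl, show (![0,1,1,0,0,0] : Fin 6 → ℝ) 5 = (0:ℝ) from rfl] at h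
      linarith [h]
    have e14 : coeff (mm 1 1) q + coeff (mm 1 4) q + coeff (mm 4 4) q = 0 := by
      have h := H2 ![0,1,0,0,1,0] rfl rfl rfl
      rw [E] at h
      simp only [show (![0,1,0,0,1,0] : Fin 6 → ℝ) 0 = (0:ℝ) from rfl, show (![0,1,0,0,1,0] : Fin 6 → ℝ) 1 = (1:ℝ) from rfl, show (![0,1,0,0,1,0] : Fin 6 → ℝ) 2 = (0:ℝ) from rfl, show (![0,1,0,0,1,0] : Fin 6 → ℝ) 3 = (0:ℝ) from rfl, show (![0,1,0,0,1,0] : Fin 6 → ℝ) 4 = (1:ℝ) from rfl, show (![0,1,0,0,1,0] : Fin 6 → ℝ) 5 = (0:ℝ) from rfl] at h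
      linarith [h]
    have e15 : coeff (mm 2 2) q + coeff (mm 2 4) q + coeff (mm 4 4) q = 0 := by
      have h := H2 ![0,0,1,0,1,0] rfl rfl rfl
      rw [E] at h
      simp only [show (![0,0,1,0,1,0] : Fin 6 → ℝ) 0 = (0:ℝ) from rfl, show (![0,0,1,0,1,0] : Fin 6 → ℝ) 1 = (0:ℝ) from rfl, show (![0,0,1,0,1,0] : Fin 6 → ℝ) 2 = (1:ℝ) from rfl, show (![0,0,1,0,1,0] : Fin 6 → ℝ) 3 = (0:ℝ) from rfl, show (![0,0,1,0,1,0] : Fin 6 → ℝ) 4 = (1:ℝ) from rfl, show (![0,0,1,0,1,0] : Fin 6 → ℝ) 5 = (0:ℝ) from rfl] at h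
      linarith [h]
    have e16 : coeff (mm 0 0) q + (-2:ℝ) * coeff (mm 0 5) q + (4:ℝ) * coeff (mm 5 5) q = 0 := by
      have h := H3 ![1,0,0,0,0,(-2:ℝ)] rfl rfl (by rw [eval_h28]; simp only [show (![1,0,0,0,0,(-2:ℝ)] : Fin 6 → ℝ) 0 = 1 from rfl, show (![1,0,0,0,0,(-2:ℝ)] : Fin 6 → ℝ) 1 = 0 from rfl, show (![1,0,0,0,0,(-2:ℝ)] : Fin 6 → ℝ) 2 = 0 from rfl, show (![1,0,0,0,0,(-2:ℝ)] : Fin 6 → ℝ) 3 = 0 from rfl, show (![1,0,0,0,0,(-2:ℝ)] : Fin 6 → ℝ) 4 = 0 from rfl, show (![1,0,0,0,0,(-2:ℝ)] : Fin 6 → ℝ) 5 = (-2:ℝ) from rfl]; norm_num)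
      rw [E] at h
      simp only [show (![1,0,0,0,0,(-2:ℝ)] : Fin 6 → ℝ) 0 = (1:ℝ) from rfl, show (![1,0,0,0,0,(-2:ℝ)] : Fin 6 → ℝ) 1 = (0:ℝ) from rfl, show (![1,0,0,0,0,(-2:ℝ)] : Fin 6 → ℝ) 2 = (0:ℝ) from rfl, show (![1,0,0,0,0,(-2:ℝ)] : Fin 6 → ℝ) 3 = (0:ℝ) from rfl, show (![1,0,0,0,0,(-2:ℝ)] : Fin 6 → ℝ) 4 = (0:ℝ) from rfl, show (![1,0,0,0,0,(-2:ℝ)] : Fin 6 → ℝ) 5 = (-2:ℝ) from rfl] at h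
      linarith [h]
    have e17 : coeff (mm 1 1) q + (-1:ℝ) * coeff (mm 1 5) q + coeff (mm 5 5) q = 0 := by
      have h := H3 ![0,1,0,0,0,(-1:ℝ)] rfl rfl (by rw [eval_h28]; simp only [show (![0,1,0,0,0,(-1:ℝ)] : Fin 6 → ℝ) 0 = 0 from rfl, show (![0,1,0,0,0,(-1:ℝ)] : Fin 6 → ℝ) 1 = 1 from rfl, show (![0,1,0,0,0,(-1:ℝ)] : Fin 6 → ℝ) 2 = 0 from rfl, show (![0,1,0,0,0,(-1:ℝ)] : Fin 6 → ℝ) 3 = 0 from rfl, show (![0,1,0,0,0,(-1:ℝ)] : Fin 6 → ℝ) 4 = 0 from rfl, show (![0,1,0,0,0,(-1:ℝ)] : Fin 6 → ℝ) 5 = (-1:ℝ) from rfl]; norm_num)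
      rw [E] at h
      simp only [show (![0,1,0,0,0,(-1:ℝ)] : Fin 6 → ℝ) 0 = (0:ℝ) from rfl, show (![0,1,0,0,0,(-1:ℝ)] : Fin 6 → ℝ) 1 = (1:ℝ) from rfl, show (![0,1,0,0,0,(-1:ℝ)] : Fin 6 → ℝ) 2 = (0:ℝ) from rfl, show (![0,1,0,0,0,(-1:ℝ)] : Fin 6 → ℝ) 3 = (0:ℝ) from rfl, show (![0,1,0,0,0,(-1:ℝ)] : Fin 6 → ℝ) 4 = (0:ℝ) from rfl, show (![0,1,0,0,0,(-1:ℝ)] : Fin 6 → ℝ) 5 = (-1:ℝ) from rfl] at h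
      linarith [h]
    have e18 : coeff (mm 3 3) q + (-1:ℝ) * coeff (mm 3 5) q + coeff (mm 5 5) q = 0 := by
      have h := H3 ![0,0,0,1,0,(-1:ℝ)] rfl rfl (by rw [eval_h28]; simp only [show (![0,0,0,1,0,(-1:ℝ)] : Fin 6 → ℝ) 0 = 0 from rfl, show (![0,0,0,1,0,(-1:ℝ)] : Fin 6 → ℝ) 1 = 0 from rfl, show (![0,0,0,1,0,(-1:ℝ)] : Fin 6 → ℝ) 2 = 0 from rfl, show (![0,0,0,1,0,(-1:ℝ)] : Fin 6 → ℝ) 3 = 1 from rfl, show (![0,0,0,1,0,(-1:ℝ)] : Fin 6 → ℝ) 4 = 0 from rfl, show (![0,0,0,1,0,(-1:ℝ)] : Fin 6 → ℝ) 5 = (-1:ℝ) from rfl]; norm_num)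
      rw [E] at h
      simp only [show (![0,0,0,1,0,(-1:ℝ)] : Fin 6 → ℝ) 0 = (0:ℝ) from rfl, show (![0,0,0,1,0,(-1:ℝ)] : Fin 6 → ℝ) 1 = (0:ℝ) from rfl, show (![0,0,0,1,0,(-1:ℝ)] : Fin 6 → ℝ) 2 = (0:ℝ) from rfl, show (![0,0,0,1,0,(-1:ℝ)] : Fin 6 → ℝ) 3 = (1:ℝ) from rfl, show (![0,0,0,1,0,(-1:ℝ)] : Fin 6 → ℝ) 4 = (0:ℝ) from rfl, show (![0,0,0,1,0,(-1:ℝ)] : Fin 6 → ℝ) 5 = (-1:ℝ) from rfl] at h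
      linarith [h]
    have e19 : coeff (mm 0 0) q + coeff (mm 0 1) q + (-3:ℝ) * coeff (mm 0 5) q + coeff (mm 1 1) q + (-3:ℝ) * coeff (mm 1 5) q + (9:ℝ) * coeff (mm 5 5) q = 0 := by
      have h := H3 ![1,1,0,0,0,(-3:ℝ)] rfl rfl (by rw [eval_h28]; simp only [show (![1,1,0,0,0,(-3:ℝ)] : Fin 6 → ℝ) 0 = 1 from rfl, show (![1,1,0,0,0,(-3:ℝ)] : Fin 6 → ℝ) 1 = 1 from rfl, show (![1,1,0,0,0,(-3:ℝ)] : Fin 6 → ℝ) 2 = 0 from rfl, show (![1,1,0,0,0,(-3:ℝ)] : Fin 6 → ℝ) 3 = 0 from rfl, show (![1,1,0,0,0,(-3:ℝ)] : Fin 6 → ℝ) 4 = 0 from rfl, show (![1,1,0,0,0,(-3:ℝ)] : Fin 6 → ℝ) 5 = (-3:ℝ) from rfl]; norm_num)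
      rw [E] at h
      simp only [show (![1,1,0,0,0,(-3:ℝ)] : Fin 6 → ℝ) 0 = (1:ℝ) from rfl, show (![1,1,0,0,0,(-3:ℝ)] : Fin 6 → ℝ) 1 = (1:ℝ) from rfl, show (![1,1,0,0,0,(-3:ℝ)] : Fin 6 → ℝ) 2 = (0:ℝ) from rfl, show (![1,1,0,0,0,(-3:ℝ)] : Fin 6 → ℝ) 3 = (0:ℝ) from rfl, show (![1,1,0,0,0,(-3:ℝ)] : Fin 6 → ℝ) 4 = (0:ℝ) from rfl, show (![1,1,0,0,0,(-3:ℝ)] : Fin 6 → ℝ) 5 = (-3:ℝ) from rfl] at h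
      linarith [h]
    have e20 : coeff (mm 0 0) q + coeff (mm 0 3) q + (-3:ℝ) * coeff (mm 0 5) q + coeff (mm 3 3) q + (-3:ℝ) * coeff (mm 3 5) q + (9:ℝ) * coeff (mm 5 5) q = 0 := by
      have h := H3 ![1,0,0,1,0,(-3:ℝ)] rfl rfl (by rw [eval_h28]; simp only [show (![1,0,0,1,0,(-3:ℝ)] : Fin 6 → ℝ) 0 = 1 from rfl, show (![1,0,0,1,0,(-3:ℝ)] : Fin 6 → ℝ) 1 = 0 from rfl, show (![1,0,0,1,0,(-3:ℝ)] : Fin 6 → ℝ) 2 = 0 from rfl, show (![1,0,0,1,0,(-3:ℝ)] : Fin 6 → ℝ) 3 = 1 from rfl, show (![1,0,0,1,0,(-3:ℝ)] : Fin 6 → ℝ) 4 = 0 from rfl, show (![1,0,0,1,0,(-3:ℝ)] : Fin 6 → ℝ) 5 = (-3:ℝ) from rfl]; norm_num)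
      rw [E] at h
      simp only [show (![1,0,0,1,0,(-3:ℝ)] : Fin 6 → ℝ) 0 = (1:ℝ) from rfl, show (![1,0,0,1,0,(-3:ℝ)] : Fin 6 → ℝ) 1 = (0:ℝ) from rfl, show (![1,0,0,1,0,(-3:ℝ)] : Fin 6 → ℝ) 2 = (0:ℝ) from rfl, show (![1,0,0,1,0,(-3:ℝ)] : Fin 6 → ℝ) 3 = (1:ℝ) from rfl, show (![1,0,0,1,0,(-3:ℝ)] : Fin 6 → ℝ) 4 = (0:ℝ) from rfl, show (![1,0,0,1,0,(-3:ℝ)] : Fin 6 → ℝ) 5 = (-3:ℝ) from rfl] at h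
      linarith [h]
    have e21 : coeff (mm 1 1) q + coeff (mm 1 3) q + (-2:ℝ) * coeff (mm 1 5) q + coeff (mm 3 3) q + (-2:ℝ) * coeff (mm 3 5) q + (4:ℝ) * coeff (mm 5 5) q = 0 := by
      have h := H3 ![0,1,0,1,0,(-2:ℝ)] rfl rfl (by rw [eval_h28]; simp only [show (![0,1,0,1,0,(-2:ℝ)] : Fin 6 → ℝ) 0 = 0 from rfl, show (![0,1,0,1,0,(-2:ℝ)] : Fin 6 → ℝ) 1 = 1 from rfl, show (![0,1,0,1,0,(-2:ℝ)] : Fin 6 → ℝ) 2 = 0 from rfl, show (![0,1,0,1,0,(-2:ℝ)] : Fin 6 → ℝ) 3 = 1 from rfl, show (![0,1,0,1,0,(-2:ℝ)] : Fin 6 → ℝ) 4 = 0 from rfl, show (![0,1,0,1,0,(-2:ℝ)] : Fin 6 → ℝ) 5 = (-2:ℝ) from rfl]; norm_num)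
      rw [E] at h
      simp only [show (![0,1,0,1,0,(-2:ℝ)] : Fin 6 → ℝ) 0 = (0:ℝ) from rfl, show (![0,1,0,1,0,(-2:ℝ)] : Fin 6 → ℝ) 1 = (1:ℝ) from rfl, show (![0,1,0,1,0,(-2:ℝ)] : Fin 6 → ℝ) 2 = (0:ℝ) from rfl, show (![0,1,0,1,0,(-2:ℝ)] : Fin 6 → ℝ) 3 = (1:ℝ) from rfl, show (![0,1,0,1,0,(-2:ℝ)] : Fin 6 → ℝ) 4 = (0:ℝ) from rfl, show (![0,1,0,1,0,(-2:ℝ)] : Fin 6 → ℝ) 5 = (-2:ℝ) from rfl] at h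
      linarith [h]

    set t : ℝ := coeff (mm 5 5) q / 2 with ht
    have hc00 : coeff (mm 0 0) q = t * 2 := by linarith
    have hc01 : coeff (mm 0 1) q = t * 1 := by linarith
    have hc02 : coeff (mm 0 2) q = t * (-2) := by linarith
    have hc03 : coeff (mm 0 3) q = t * 17 := by linarith
    have hc04 : coeff (mm 0 4) q = t * 4 := by linarith
    have hc05 : coeff (mm 0 5) q = t * 5 := by linarith
    have hc11 : coeff (mm 1 1) q = t * 0 := by linarith
    have hc12 : coeff (mm 1 2) q = t * 0 := by linarith
    have hc13 : coeff (mm 1 3) q = t * 8 := by linarith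
    have hc14 : coeff (mm 1 4) q = t * 0 := by linarith
    have hc15 : coeff (mm 1 5) q = t * 2 := by linarith
    have hc22 : coeff (mm 2 2) q = t * 0 := by linarith
    have hc23 : coeff (mm 2 3) q = t * (-1) := by linarith
    have hc24 : coeff (mm 2 4) q = t * 0 := by linarith
    have hc25 : coeff (mm 2 5) q = t * (-1) := by linarith
    have hc33 : coeff (mm 3 3) q = t * 8 := by linarith
    have hc34 : coeff (mm 3 4) q = t * 2 := by linarith
    have hc35 : coeff (mm 3 5) q = t * 10 := by linarith
    have hc44 : coeff (mm 4 4) q = t * 0 := by linarith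
    have hc45 : coeff (mm 4 5) q = t * 2 := by linarith
    have hc55 : coeff (mm 5 5) q = t * 2 := by linarith
    refine ⟨t, ?_⟩
    rw [decomp q hq, hc00, hc01, hc02, hc03, hc04, hc05, hc11, hc12, hc13, hc14, hc15, hc22, hc23, hc24, hc25, hc33, hc34, hc35, hc44, hc45, hc55]
    rw [MvPolynomial.smul_eq_C_mul, aP8]
    simp only [C_mul, map_neg, map_ofNat, map_one, mul_zero, map_zero, zero_mul]
    ring
  · rintro ⟨t, rfl⟩
    refine ⟨?_, ?_, ?_, ?_⟩
    · rw [MvPolynomial.smul_eq_C_mul]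
      exact (isHomogeneous_C _ t).mul aP8_hom
    · intro x hx1 hh
      rw [eval_smul_aP8, eval_aP8]
      rw [eval_h18] at hh
      have hx0 : x 0 = 3 * x 1 + x 2 - 8 * x 3 - 2 * x 4 - 2 * x 5 := by linarith
      rw [hx0, hx1]
      ring
    · intro x hx0 hx3 hx5
      rw [eval_smul_aP8, eval_aP8, hx0, hx3, hx5]
      ring
    · intro x hx2 hx4 hh
      rw [eval_smul_aP8, eval_aP8]
      rw [eval_h28] at hh
      have hx5 : x 5 = -(2 * x 0) - x 1 + 5 * x 2 - x 3 + 3 * x 4 := by linarith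
      rw [hx5, hx2, hx4]
      ring
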